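/- If S is a numerical semigroup with concentration C(S) = 2 and multiplicity m, then S ∪ {F(S)} is a numerical semigroup with multiplicity m whose concentration is at most 2, where F(S) is the Frobenius number of S. -/
import Mathlib


open Set

/-- A numerical semigroup: contains 0, closed under addition, finite complement. -/
def IsNumSgp (S : Set ℕ) : Prop :=
  0 ∈ S ∧ (∀ a ∈ S, ∀ b ∈ S, a + b ∈ S) ∧ (Sᶜ : Set ℕ).Finite

/-- The multiplicity: least positive element. -/
noncomputable def mult (S : Set ℕ) : ℕ := sInf {n | n ∈ S ∧ n ≠ 0}

/-- next_S(s) = min { x ∈ S | s < x }. -/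
noncomputable def nextS (S : Set ℕ) (s : ℕ) : ℕ := sInf {x | x ∈ S ∧ s < x}

/-- The concentration C(S) = max { next_S(s) - s | s ∈ S \ {0} }. -/
noncomputable def conc (S : Set ℕ) : ℕ :=
  sSup {d | ∃ s ∈ S, s ≠ 0 ∧ d = nextS S s - s}

/-- The Frobenius number: largest gap. -/
noncomputable def frob (S : Set ℕ) : ℕ := sSup (Sᶜ : Set ℕ)

/-- The genus: number of gaps. -/
noncomputable def genus (S : Set ℕ) : ℕ := (Sᶜ : Set ℕ).ncard

/-- x is a minimal generator of S. -/
def IsMinGen (S : Set ℕ) (x : ℕ) : Prop :=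
  x ∈ S ∧ x ≠ 0 ∧ ¬∃ a ∈ S, ∃ b ∈ S, a ≠ 0 ∧ b ≠ 0 ∧ a + b = x

/-- The embedding dimension: number of minimal generators. -/
noncomputable def edim (S : Set ℕ) : ℕ := {x | IsMinGen S x}.ncard

/-- n(S): the number of elements of S smaller than the Frobenius number. -/
noncomputable def nS (S : Set ℕ) : ℕ := {s | s ∈ S ∧ s < frob S}.ncard

/-- The half-line Δ(m) = {0} ∪ {m, m+1, ...}. -/
def Delta (m : ℕ) : Set ℕ := {0} ∪ {n | m ≤ n}

def IsHalfLine (S : Set ℕ) : Prop := ∃ m, S = Delta m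

/-- An irreducible numerical semigroup. -/
def Irred (S : Set ℕ) : Prop :=
  ¬∃ T₁ T₂ : Set ℕ, IsNumSgp T₁ ∧ IsNumSgp T₂ ∧ S ⊂ T₁ ∧ S ⊂ T₂ ∧ S = T₁ ∩ T₂

theorem stmt4 (S : Set ℕ) (m : ℕ) (hS : IsNumSgp S) (hC : conc S = 2)
    (hm : mult S = m) :
    IsNumSgp (S ∪ {frob S}) ∧ mult (S ∪ {frob S}) = m ∧ conc (S ∪ {frob S}) ≤ 2 := by
  obtain ⟨h0, hadd, hfin⟩ := hS
  have concle1 : (∀ s ∈ S, s ≠ 0 → s + 1 ∈ S) → conc S ≤ 1 := by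
    intro h
    apply csSup_le'
    rintro d ⟨s, hs, hs0, rfl⟩
    have : nextS S s ≤ s + 1 := Nat.sInf_le ⟨h s hs hs0, by omega⟩
    omega
  have hcompl : (Sᶜ : Set ℕ).Nonempty := by
    by_contra h
    rw [Set.not_nonempty_iff_eq_empty, Set.compl_empty_iff] at h
    have := concle1 (fun s _ _ => by rw [h]; trivial)
    omega
  have hbdd : BddAbove (Sᶜ : Set ℕ) := hfin.bddAbove
  have hFmem : frob S ∈ (Sᶜ : Set ℕ) := Nat.sSup_mem hcompl hbdd
  have hFnS : frob S ∉ S := hFmem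
  have hgt : ∀ x, frob S < x → x ∈ S := by
    intro x hx
    by_contra hxS
    have : x ≤ frob S := le_csSup hbdd hxS
    omega
  have hmultset : m ∈ S ∧ m ≠ 0 := by
    have h1 : mult S ∈ {n | n ∈ S ∧ n ≠ 0} :=
      Nat.sInf_mem ⟨frob S + 1, hgt _ (by omega), by omega⟩
    rw [hm] at h1; exact h1
  have hmle : ∀ n ∈ S, n ≠ 0 → m ≤ n := by
    intro n hn hn0
    have := Nat.sInf_le (s := {n | n ∈ S ∧ n ≠ 0}) ⟨hn, hn0⟩
    rw [← hm]; exact this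
  have hmF : m < frob S := by
    rcases lt_or_ge m (frob S) with h | h
    · exact h
    · have hne : frob S ≠ m := fun e => hFnS (e ▸ hmultset.1)
      have : conc S ≤ 1 := concle1 (fun s hs hs0 => hgt (s+1) (by
        have := hmle s hs hs0
        have := lt_of_le_of_ne h hne
        omega))
      omega
  have hm1 : 1 ≤ m := by have := hmultset.2; omega
  refine ⟨⟨Or.inl h0, ?_, ?_⟩, ?_, ?_⟩
  · rintro a (ha | ha) b (hb | hb)
    · exact Or.inl (hadd a ha b hb)
    · simp only [Set.mem_singleton_iff] at hb; subst hb
      rcases Nat.eq_zero_or_pos a with rfl | ha0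
      · exact Or.inr (by simp)
      · exact Or.inl (hgt _ (by omega))
    · simp only [Set.mem_singleton_iff] at ha; subst ha
      rcases Nat.eq_zero_or_pos b with rfl | hb0
      · exact Or.inr (by simp)
      · exact Or.inl (hgt _ (by omega))
    · simp only [Set.mem_singleton_iff] at ha hb; subst ha; subst hb
      exact Or.inl (hgt _ (by omega))
  · apply hfin.subset
    intro x hx
    simp only [Set.mem_compl_iff, Set.mem_union, Set.mem_singleton_iff, not_or] at hx ⊢
    exact hx.1
  · show sInf {n | n ∈ S ∪ {frob S} ∧ n ≠ 0} = m
    apply le_antisymm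
    · exact Nat.sInf_le ⟨Or.inl hmultset.1, hmultset.2⟩
    · refine le_csInf ⟨m, Or.inl hmultset.1, hmultset.2⟩ ?_
      rintro n ⟨hn | hn, hn0⟩
      · exact hmle n hn hn0
      · simp only [Set.mem_singleton_iff] at hn; omega
  · apply csSup_le'
    rintro d ⟨s, hs, hs0, rfl⟩
    rcases hs with hs | hs
    · have hbddC : BddAbove {d | ∃ s ∈ S, s ≠ 0 ∧ d = nextS S s - s} := by
        refine ⟨frob S + 1, ?_⟩
        rintro d ⟨t, ht, ht0, rfl⟩
        have : nextS S t ≤ t + frob S + 1 := Nat.sInf_le ⟨hgt _ (by omega), by omega⟩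
        omega
      have hne : nextS S s ∈ {x | x ∈ S ∧ s < x} :=
        Nat.sInf_mem ⟨s + frob S + 1, hgt _ (by omega), by omega⟩
      have h2 : nextS S s - s ≤ 2 := by
        rw [← hC]
        exact le_csSup hbddC ⟨s, hs, hs0, rfl⟩
      have hle : nextS (S ∪ {frob S}) s ≤ nextS S s :=
        Nat.sInf_le ⟨Or.inl hne.1, hne.2⟩
      omega
    · simp only [Set.mem_singleton_iff] at hs; subst hs
      have : nextS (S ∪ {frob S}) (frob S) ≤ frob S + 1 :=
        Nat.sInf_le ⟨Or.inl (hgt _ (by omega)), by omega⟩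
      omega
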